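/- Let $a,b,c\in\mathbb{N}$, $d\in\mathbb{Z}$, and $\mu$ an integer with $\mu^2\equiv d\pmod{4abc^2}$. If integers $p,q$ satisfy $p^2-dq^2=\pm 4ac$ and $p\equiv\mu q\pmod{2ac}$, then $\frac{p-\mu q}{2ac}\cdot\frac{p+\mu q}{2}\equiv\pm 1\pmod{bc}$; in particular, for every prime $l$ dividing $b$ it is not the case that $p\equiv\mu q\pmod{2acl}$. -/
import Mathlib


/-- Remark 2.1 of the paper: if `p² - d q² = ±4ac`, `p ≡ μ q (mod 2ac)` and
`μ² ≡ d (mod 4abc²)`, then `((p-μq)/(2ac)) · ((p+μq)/2) ≡ ±1 (mod bc)`; in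
particular `p ≢ μ q (mod 2acl)` for every prime `l` dividing `b`. -/
theorem stmt2 (a b c : ℕ) (ha : 1 ≤ a) (hb : 1 ≤ b) (hc : 1 ≤ c) (d μ p q ε : ℤ)
    (hε : ε = 1 ∨ ε = -1)
    (hdvd : (2 * a * c : ℤ) ∣ (p - μ * q))
    (hcong : (4 * a * b * c ^ 2 : ℤ) ∣ (μ ^ 2 - d))
    (heq : p ^ 2 - d * q ^ 2 = ε * (4 * a * c)) :
    ((b * c : ℤ) ∣ ((p - μ * q) / (2 * a * c) * ((p + μ * q) / 2) - ε)) ∧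
      (∀ l : ℕ, l.Prime → (l : ℤ) ∣ (b : ℤ) →
        ¬ ((2 * a * c * l : ℤ) ∣ (p - μ * q))) := by
  obtain ⟨k, hk⟩ := hdvd
  obtain ⟨m, hm⟩ := hcong
  have ha' : (0:ℤ) < a := by exact_mod_cast ha
  have hc' : (0:ℤ) < c := by exact_mod_cast hc
  have hac : (2 * (a:ℤ) * c) ≠ 0 := by positivity
  have hs : p + μ * q = 2 * ((a:ℤ) * c * k + μ * q) := by linarith
  have hdiv1 : (p - μ * q) / (2 * (a:ℤ) * c) = k := by
    rw [hk, Int.mul_ediv_cancel_left _ hac]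
  have hdiv2 : (p + μ * q) / 2 = (a:ℤ) * c * k + μ * q := by
    rw [hs, Int.mul_ediv_cancel_left _ (by norm_num : (2:ℤ) ≠ 0)]
  have hkey0 : (4 * (a:ℤ) * c) * (k * ((a:ℤ) * c * k + μ * q) - ε + b * c * (m * q ^ 2)) = 0 := by
    linear_combination (-(2*(a:ℤ)*c*k + p + μ*q)) * hk + heq - q^2 * hm
  have hkey : k * ((a:ℤ) * c * k + μ * q) - ε = -(b * c * (m * q ^ 2)) := by
    have h4 : (4 * (a:ℤ) * c) ≠ 0 := by positivity
    have := mul_eq_zero.mp hkey0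
    rcases this with h | h
    · exact absurd h h4
    · linarith
  constructor
  · rw [hdiv1, hdiv2]
    exact ⟨-(m * q ^ 2), by rw [hkey]; ring⟩
  · rintro l hl hlb ⟨t, ht⟩
    have hkl : k = l * t := by
      have : (2 * (a:ℤ) * c) * k = (2 * (a:ℤ) * c) * (l * t) := by
        rw [← hk, ht]; ring
      exact mul_left_cancel₀ hac this
    have hdε : (l:ℤ) ∣ ε := by
      have : ε = k * ((a:ℤ) * c * k + μ * q) + b * c * (m * q ^ 2) := by linarith
      rw [this, hkl]
      exact dvd_add (Dvd.dvd.mul_right ⟨t, rfl⟩ _)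
        (Dvd.dvd.mul_right (hlb.mul_right _) _)
    have h1 : (l:ℤ) ∣ 1 := by
      rcases hε with rfl | rfl
      · exact hdε
      · exact (dvd_neg.mp hdε)
    have := Int.le_of_dvd one_pos h1
    have := hl.one_lt
    omega
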